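/- arXiv:1101.2645 — 3 statements merged into one kernel-verified Lean document; each statement's English description precedes it below -/
import Mathlib

section
/- For the weights w_t(k) = sqrt((k+1)t/(1+(k+1)t)) on ℕ with t ∈ (0,1), the quantity sup over t ∈ (0,1) of |1 - w_t(k-1)/w_t(k)| is at most 1/(k+1+sqrt(k^2+k)) for every k ≥ 1; in particular it tends to 0 as k → ∞. -/
theorem quantum_disk_h3_bound :
    (∀ k : ℕ, 1 ≤ k →
      sSup ((fun t : ℝ =>
          |1 - Real.sqrt (k * t / (1 + k * t)) / Real.sqrt ((k + 1) * t / (1 + (k + 1) * t))|) ''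
        Set.Ioo (0 : ℝ) 1) ≤ 1 / (k + 1 + Real.sqrt (k ^ 2 + k))) ∧
      Filter.Tendsto (fun k : ℕ => 1 / (k + 1 + Real.sqrt (k ^ 2 + k)))
        Filter.atTop (nhds 0) := by
  constructor
  · intro k hk
    set K : ℝ := (k : ℝ) with hKdef
    have hK : (1 : ℝ) ≤ K := by rw [hKdef]; exact_mod_cast hk
    have hs2 : Real.sqrt (K ^ 2 + K) ^ 2 = K ^ 2 + K := by
      rw [Real.sq_sqrt]; nlinarith
    have hs0 : 0 ≤ Real.sqrt (K ^ 2 + K) := Real.sqrt_nonneg _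
    have hC0 : (0:ℝ) < K + 1 + Real.sqrt (K ^ 2 + K) := by nlinarith
    apply Real.sSup_le
    · rintro x ⟨t, ⟨ht0, _⟩, rfl⟩
      simp only
      have hd1 : (0:ℝ) < 1 + K * t := by nlinarith
      have hd2 : (0:ℝ) < 1 + (K + 1) * t := by nlinarith
      set a : ℝ := K * t / (1 + K * t) with ha
      set b : ℝ := (K + 1) * t / (1 + (K + 1) * t) with hb
      have ha0 : 0 ≤ a := by positivity
      have hb0 : (0:ℝ) < b := by positivity
      have hab : a ≤ b := by
        rw [ha, hb, div_le_div_iff₀ hd1 hd2]; nlinarith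
      have hlow : K / (K + 1) * b ≤ a := by
        rw [ha, hb, div_mul_div_comm, div_le_div_iff₀ (by positivity) hd1]
        nlinarith [mul_pos ht0 ht0, mul_nonneg (mul_nonneg (by linarith : (0:ℝ) ≤ K) ht0.le) ht0.le, sq_nonneg t]
      have hr : Real.sqrt a / Real.sqrt b = Real.sqrt (a / b) := by
        rw [Real.sqrt_div ha0]
      have hr1 : Real.sqrt (a / b) ≤ 1 := by
        rw [show (1:ℝ) = Real.sqrt 1 by simp]
        exact Real.sqrt_le_sqrt (by rw [div_le_one hb0]; exact hab)
      have hrlow : Real.sqrt (K / (K + 1)) ≤ Real.sqrt (a / b) := by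
        apply Real.sqrt_le_sqrt
        rw [le_div_iff₀ hb0]
        exact hlow
      have hsqKK : Real.sqrt (K / (K + 1)) = Real.sqrt (K ^ 2 + K) / (K + 1) := by
        rw [show K / (K + 1) = (K ^ 2 + K) / (K + 1) ^ 2 by
          field_simp]
        rw [Real.sqrt_div (by nlinarith), Real.sqrt_sq (by nlinarith)]
      rw [hr, abs_of_nonneg (by linarith)]
      have : 1 - Real.sqrt (a / b) ≤ 1 - Real.sqrt (K ^ 2 + K) / (K + 1) := by
        rw [← hsqKK]; linarith
      refine this.trans ?_
      have heq : (1 - Real.sqrt (K ^ 2 + K) / (K + 1)) * (K + 1 + Real.sqrt (K ^ 2 + K)) = 1 := by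
        field_simp
        nlinarith [hs2, Real.sq_sqrt (show (0:ℝ) ≤ K * (K + 1) by nlinarith)]
      exact le_of_eq ((eq_div_iff hC0.ne').mpr heq)
    · positivity
  · have h : Filter.Tendsto (fun k : ℕ => (k : ℝ) + 1 + Real.sqrt (k ^ 2 + k))
        Filter.atTop Filter.atTop := by
      have h2 : ∀ n : ℕ, (n : ℝ) + 1 ≤ (n : ℝ) + 1 + Real.sqrt ((n:ℝ) ^ 2 + n) := fun n => by
        nlinarith [Real.sqrt_nonneg ((n:ℝ) ^ 2 + n)]
      exact Filter.tendsto_atTop_mono h2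
        (Filter.tendsto_atTop_add_const_right _ 1 tendsto_natCast_atTop_atTop)
    simpa only [one_div, Pi.inv_def] using h.inv_tendsto_atTop
end

section
/- Let w : ℤ → ℝ be positive and strictly increasing with values in [w₋, w₊] where 0 < w₋ < w₊, and let S(k) = w(k)^2 - w(k-1)^2. Then for every integer i, ∑_{k ≤ i} S(k)/w(k) ≤ 2(w(i) − w₋) ≤ 2(w₊ − w₋). -/
theorem integral_estimate_below (w : ℤ → ℝ) (wm wp : ℝ) (hm : 0 < wm) (h : wm < wp)
    (hpos : ∀ k, 0 < w k) (hmono : StrictMono w)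
    (hrange : ∀ k, w k ∈ Set.Icc wm wp) (i : ℤ) :
    (∑' k : {k : ℤ // k ≤ i}, (w k ^ 2 - w ((k : ℤ) - 1) ^ 2) / w k) ≤ 2 * (w i - wm) ∧
      2 * (w i - wm) ≤ 2 * (wp - wm) := by
  have hwm : ∀ k, wm ≤ w k := fun k => (hrange k).1
  have hle : ∀ k : ℤ, w (k - 1) ≤ w k := fun k => (hmono (by omega : k - 1 < k)).le
  set g : ℤ → ℝ := fun k => (w k ^ 2 - w (k - 1) ^ 2) / w k with hg
  have hg0 : ∀ k, 0 ≤ g k := fun k =>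
    div_nonneg (by nlinarith [hle k, hpos (k - 1), hpos k]) (hpos k).le
  have hgle : ∀ k, g k ≤ 2 * (w k - w (k - 1)) := by
    intro k
    rw [hg]
    rw [div_le_iff₀ (hpos k)]
    nlinarith [hle k, hpos (k - 1)]
  have hc : 0 ≤ 2 * (w i - wm) := by nlinarith [hwm i]
  have tele : ∀ n : ℕ, ∑ k ∈ Finset.Icc (i - n) i, 2 * (w k - w (k - 1))
      = 2 * (w i - w (i - n - 1)) := by
    intro n
    induction n with
    | zero => simp
    | succ n ih =>
      have hins : Finset.Icc (i - ((n : ℤ) + 1)) i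
          = insert (i - ((n : ℤ) + 1)) (Finset.Icc (i - (n : ℤ)) i) := by
        ext k; simp only [Finset.mem_Icc, Finset.mem_insert]; omega
      have hnot : (i - ((n : ℤ) + 1)) ∉ Finset.Icc (i - (n : ℤ)) i := by
        simp only [Finset.mem_Icc]; omega
      push_cast
      rw [hins, Finset.sum_insert hnot, ih,
        show i - ((n : ℤ) + 1) = i - n - 1 from by ring]
      ring
  have key : ∀ s : Finset {k : ℤ // k ≤ i}, ∑ x ∈ s, g x ≤ 2 * (w i - wm) := by
    intro s
    rcases s.eq_empty_or_nonempty with rfl | hne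
    · simpa using hc
    set t : Finset ℤ := s.image Subtype.val with ht
    have htne : t.Nonempty := hne.image _
    have hsum : ∑ x ∈ s, g x = ∑ k ∈ t, g k := by
      rw [ht, Finset.sum_image]
      intro a _ b _ hab
      exact Subtype.ext hab
    set n : ℕ := (i - t.min' htne).toNat with hn
    have hsub : t ⊆ Finset.Icc (i - n) i := by
      intro k hk
      have h1 : t.min' htne ≤ k := Finset.min'_le t k hk
      have h2 : k ≤ i := by
        rcases Finset.mem_image.mp hk with ⟨⟨a, ha⟩, _, rfl⟩
        exact ha
      have h3 : t.min' htne ≤ i := le_trans h1 h2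
      simp only [Finset.mem_Icc]
      omega
    calc ∑ x ∈ s, g x = ∑ k ∈ t, g k := hsum
      _ ≤ ∑ k ∈ t, 2 * (w k - w (k - 1)) := Finset.sum_le_sum fun k _ => hgle k
      _ ≤ ∑ k ∈ Finset.Icc (i - n) i, 2 * (w k - w (k - 1)) := by
          apply Finset.sum_le_sum_of_subset_of_nonneg hsub
          intro k _ _
          nlinarith [hle k]
      _ = 2 * (w i - w (i - n - 1)) := tele n
      _ ≤ 2 * (w i - wm) := by nlinarith [hwm (i - n - 1)]
  constructor
  · exact tsum_le_of_sum_le' hc key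
  · have := (hrange i).2
    linarith
end

section
/- Let w : ℤ → ℝ be positive and increasing and let h₃(k) ≥ 0 satisfy 1 − w(k−1)/w(k) ≤ h₃(k) for all k. Then for all k and n ≥ 1, |1 − w(k)^{n−1}/(w(k+1)·w(k+2)⋯w(k+n−1))| ≤ ∑_{j=0}^{n−1} j·h₃(k+n−j). -/
theorem weight_ratio_product_bound (w : ℤ → ℝ) (hpos : ∀ k, 0 < w k) (hmono : Monotone w)
    (h₃ : ℤ → ℝ) (h₃nonneg : ∀ k, 0 ≤ h₃ k)
    (hstep : ∀ k, 1 - w (k - 1) / w k ≤ h₃ k) :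
    ∀ (k : ℤ) (n : ℕ), 1 ≤ n →
      |1 - w k ^ (n - 1) / ∏ j ∈ Finset.range (n - 1), w (k + 1 + j)| ≤
        ∑ j ∈ Finset.range n, (j : ℝ) * h₃ (k + n - j) := by
  have ratio_le_one : ∀ (a b : ℤ), a ≤ b → w a / w b ≤ 1 := by
    intro a b h
    rw [div_le_one (hpos b)]
    exact hmono h
  have ratio_nonneg : ∀ (a b : ℤ), 0 ≤ w a / w b := fun a b =>
    le_of_lt (div_pos (hpos a) (hpos b))
  -- Telescoping bound for a single ratio
  have A : ∀ (k : ℤ) (m : ℕ), 1 - w k / w (k + m) ≤ ∑ i ∈ Finset.range m, h₃ (k + 1 + i) := by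
    intro k m
    induction m with
    | zero => simp [le_of_eq (div_self (ne_of_gt (hpos k))).symm]
    | succ m ih =>
      rw [Finset.sum_range_succ]
      have hx1 : w (k + m) / w (k + m + 1) ≤ 1 := ratio_le_one _ _ (by omega)
      have hx0 : 0 ≤ w (k + m) / w (k + m + 1) := ratio_nonneg _ _
      have hq1 : w k / w (k + m) ≤ 1 := ratio_le_one _ _ (by omega)
      have hq0 : 0 ≤ w k / w (k + m) := ratio_nonneg _ _
      have hstep' : 1 - w (k + m) / w (k + m + 1) ≤ h₃ (k + m + 1) := by
        have := hstep (k + m + 1)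
        simpa using this
      have hfac : w k / w (k + ((m : ℤ) + 1)) =
          (w k / w (k + m)) * (w (k + m) / w (k + m + 1)) := by
        have h1 : w (k + m) ≠ 0 := ne_of_gt (hpos _)
        have h2 : w (k + (m : ℤ) + 1) ≠ 0 := ne_of_gt (hpos _)
        rw [div_mul_div_comm]
        rw [mul_comm (w (k + m)) (w (k + m + 1))]
        rw [mul_div_mul_right _ _ h1]
        ring_nf
      have key : 1 - w k / w (k + ((m : ℤ) + 1)) ≤
          (1 - w k / w (k + m)) + (1 - w (k + m) / w (k + m + 1)) := by
        rw [hfac]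
        nlinarith
      have hcast : ((m + 1 : ℕ) : ℤ) = (m : ℤ) + 1 := by push_cast; ring
      rw [hcast]
      have heq : (k + 1 + (m : ℤ)) = k + (m : ℤ) + 1 := by ring
      rw [heq]
      linarith
  -- Product bound
  have B : ∀ (k : ℤ) (m : ℕ),
      1 - ∏ j ∈ Finset.range m, (w k / w (k + 1 + j)) ≤
        ∑ i ∈ Finset.range m, ((m - i : ℕ) : ℝ) * h₃ (k + 1 + i) := by
    intro k m
    induction m with
    | zero => simp
    | succ m ih =>
      rw [Finset.prod_range_succ]
      have hQ1 : ∏ j ∈ Finset.range m, (w k / w (k + 1 + j)) ≤ 1 :=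
        Finset.prod_le_one (fun i _ => ratio_nonneg _ _)
          (fun i _ => ratio_le_one _ _ (by omega))
      have hQ0 : 0 ≤ ∏ j ∈ Finset.range m, (w k / w (k + 1 + j)) :=
        Finset.prod_nonneg fun i _ => ratio_nonneg _ _
      have hx1 : w k / w (k + 1 + m) ≤ 1 := ratio_le_one _ _ (by omega)
      have hx0 : 0 ≤ w k / w (k + 1 + m) := ratio_nonneg _ _
      have hA : 1 - w k / w (k + 1 + m) ≤ ∑ i ∈ Finset.range (m + 1), h₃ (k + 1 + i) := by
        have h := A k (m + 1)
        have : (k + ((m + 1 : ℕ) : ℤ)) = k + 1 + (m : ℤ) := by push_cast; ring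
        rwa [this] at h
      have key : 1 - (∏ j ∈ Finset.range m, (w k / w (k + 1 + j))) * (w k / w (k + 1 + m)) ≤
          (1 - ∏ j ∈ Finset.range m, (w k / w (k + 1 + j))) + (1 - w k / w (k + 1 + m)) := by
        nlinarith
      have hsum : ∑ i ∈ Finset.range m, ((m - i : ℕ) : ℝ) * h₃ (k + 1 + i) +
          ∑ i ∈ Finset.range (m + 1), h₃ (k + 1 + i) =
          ∑ i ∈ Finset.range (m + 1), ((m + 1 - i : ℕ) : ℝ) * h₃ (k + 1 + i) := by
        rw [Finset.sum_range_succ (f := fun i => h₃ (k + 1 + i)),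
            Finset.sum_range_succ (f := fun i => ((m + 1 - i : ℕ) : ℝ) * h₃ (k + 1 + i))]
        have h1 : ((m + 1 - m : ℕ) : ℝ) = 1 := by norm_num
        rw [h1, one_mul, ← add_assoc, ← Finset.sum_add_distrib]
        congr 1
        apply Finset.sum_congr rfl
        intro i hi
        have hi' : i < m := Finset.mem_range.mp hi
        have : ((m + 1 - i : ℕ) : ℝ) = ((m - i : ℕ) : ℝ) + 1 := by
          have : m + 1 - i = (m - i) + 1 := by omega
          rw [this]; push_cast; ring
        rw [this]; ring
      linarith
  intro k n hn
  obtain ⟨m, rfl⟩ : ∃ m, n = m + 1 := ⟨n - 1, by omega⟩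
  have hm : m + 1 - 1 = m := rfl
  rw [hm]
  have hprod : w k ^ m / ∏ j ∈ Finset.range m, w (k + 1 + j) =
      ∏ j ∈ Finset.range m, (w k / w (k + 1 + j)) := by
    rw [Finset.prod_div_distrib, Finset.prod_const, Finset.card_range]
  rw [hprod]
  have hQ1 : ∏ j ∈ Finset.range m, (w k / w (k + 1 + j)) ≤ 1 :=
    Finset.prod_le_one (fun i _ => ratio_nonneg _ _)
      (fun i _ => ratio_le_one _ _ (by omega))
  rw [abs_of_nonneg (by linarith)]
  have hrhs : ∑ j ∈ Finset.range (m + 1), (j : ℝ) * h₃ (k + (m + 1 : ℕ) - j) =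
      ∑ i ∈ Finset.range m, ((m - i : ℕ) : ℝ) * h₃ (k + 1 + i) := by
    rw [← Finset.sum_range_reflect (fun j => (j : ℝ) * h₃ (k + (m + 1 : ℕ) - j)) (m + 1)]
    rw [Finset.sum_range_succ]
    have hlast : ((m + 1 - 1 - m : ℕ) : ℝ) * h₃ (k + ((m + 1 : ℕ) : ℤ) - ((m + 1 - 1 - m : ℕ) : ℤ)) = 0 := by
      norm_num
    rw [hlast, add_zero]
    apply Finset.sum_congr rfl
    intro i hi
    have hi' : i < m := Finset.mem_range.mp hi
    have h1 : m + 1 - 1 - i = m - i := by omega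
    rw [h1]
    have h2 : (k + ((m + 1 : ℕ) : ℤ) - ((m - i : ℕ) : ℤ)) = k + 1 + i := by
      have : ((m - i : ℕ) : ℤ) = (m : ℤ) - i := by omega
      rw [this]; push_cast; ring
    rw [h2]
  rw [hrhs]
  exact B k m
end
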